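/- There exists a constant c > 0, depending only on c₀, c₁, α and β, such that for every ξ ∈ M for which the cell problem has a solution v_ξ ∈ S one has f*(A^eff(ξ)) ≤ c f(ξ) + c. -/

import Mathlib

open MeasureTheory ENNReal
open scoped RealInnerProductSpace

/-- `Md d`: the space of symmetric `d × d` real matrices, identified (as in the paper)
with the Euclidean space `ℝ^{d(d+1)/2}`. -/
abbrev Md (d : ℕ) : Type := EuclideanSpace ℝ (Fin (d * (d + 1) / 2))

lemma aux_rpow_le_rpow_add_one {x p q : ℝ} (hx : 0 ≤ x) (hp : 0 < p) (hpq : p ≤ q) :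
    x ^ p ≤ x ^ q + 1 := by
  rcases le_total x 1 with h | h
  · have h1 : x ^ p ≤ 1 := Real.rpow_le_one hx h hp.le
    nlinarith [Real.rpow_nonneg hx q]
  · have := Real.rpow_le_rpow_of_exponent_le h hpq
    linarith

lemma aux_add_rpow {a b p q : ℝ} (ha : 0 ≤ a) (hb : 0 ≤ b) (hp : 0 ≤ p) (hpq : p ≤ q) :
    (a + b) ^ p ≤ 2 ^ q * (a ^ p + b ^ p) := by
  have hm : 0 ≤ max a b := le_trans ha (le_max_left a b)
  have h1 : a + b ≤ 2 * max a b := by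
    rcases le_total a b with h | h
    · rw [max_eq_right h]; linarith
    · rw [max_eq_left h]; linarith
  calc (a + b) ^ p ≤ (2 * max a b) ^ p :=
        Real.rpow_le_rpow (by linarith) h1 hp
    _ = 2 ^ p * (max a b) ^ p := Real.mul_rpow (by norm_num) hm
    _ ≤ 2 ^ q * (a ^ p + b ^ p) := by
        refine mul_le_mul (Real.rpow_le_rpow_of_exponent_le one_le_two hpq) ?_
          (Real.rpow_nonneg hm p) (Real.rpow_nonneg (by norm_num) q)
        rcases max_cases a b with ⟨h, _⟩ | ⟨h, _⟩ <;> rw [h] <;>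
          nlinarith [Real.rpow_nonneg ha p, Real.rpow_nonneg hb p]

lemma aux_conj {p : ℝ} (hp : 1 < p) : (p / (p - 1)).HolderConjugate p :=
  (Real.HolderConjugate.conjExponent hp).symm

lemma aux_young {x y p ε : ℝ} (hx : 0 ≤ x) (hy : 0 ≤ y) (hp : 1 < p) (hε : 0 < ε) :
    x * y ≤ ε ^ (p / (p - 1)) * x ^ (p / (p - 1)) / (p / (p - 1)) + ε ^ (-p) * y ^ p / p := by
  have hconj := aux_conj hp
  have h := Real.young_inequality_of_nonneg (mul_nonneg hε.le hx) (div_nonneg hy hε.le) hconj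
  have e1 : (ε * x) * (y / ε) = x * y := by field_simp
  have e2 : (ε * x) ^ (p / (p - 1)) = ε ^ (p / (p - 1)) * x ^ (p / (p - 1)) :=
    Real.mul_rpow hε.le hx
  have e3 : (y / ε) ^ p = ε ^ (-p) * y ^ p := by
    rw [Real.div_rpow hy hε.le, Real.rpow_neg hε.le]
    ring
  rw [e1, e2, e3] at h
  exact h

set_option maxHeartbeats 1000000 in
/-- second inequality in Lemma `l_eff-tenz`: there is a constant
`c > 0` depending only on `c₀, c₁, α, β` such that `f*(A^eff(ξ)) ≤ c f(ξ) + c`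
whenever the cell problem for `ξ` is solvable. -/
theorem stmt12
    {d : ℕ} (hd : 1 ≤ d)
    (c₀ c₁ α β : ℝ) (hc₀ : 0 < c₀) (hc₁ : 0 < c₁) (hα : 1 < α) (hαβ : α ≤ β) :
    ∃ c : ℝ, 0 < c ∧
      ∀ (Ω : Type) [MeasurableSpace Ω] (P : Measure Ω) [IsProbabilityMeasure P]
        (p : Ω → ℝ), Measurable p → (∀ ω, α ≤ p ω) → (∀ ω, p ω ≤ β) →
      ∀ A : Ω → Md d → Md d, (∀ ξ : Md d, Measurable (fun ω => A ω ξ)) →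
        (∀ ω, Continuous (A ω)) →
        (∀ ω (ξ : Md d), c₀ * ‖ξ‖ ^ p ω - c₀⁻¹ ≤ ⟪A ω ξ, ξ⟫) →
        (∀ ω (ξ : Md d), ‖A ω ξ‖ ^ (p ω / (p ω - 1)) ≤ c₁ * ‖ξ‖ ^ p ω + c₁) →
      -- `S` is a linear subspace of the measurable functions `Ω → M` with finite
      -- `p(⬝)`-integral and zero mean:
      ∀ S : Set (Ω → Md d), (∀ w ∈ S, Measurable w) →
        (∀ w ∈ S, ∫⁻ ω, ENNReal.ofReal (‖w ω‖ ^ p ω) ∂P < ⊤) →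
        ((0 : Ω → Md d) ∈ S) →
        (∀ w₁ ∈ S, ∀ w₂ ∈ S, w₁ + w₂ ∈ S) →
        (∀ (r : ℝ), ∀ w ∈ S, r • w ∈ S) →
        (∀ w ∈ S, ∫ ω, w ω ∂P = 0) →
      ∀ f : Md d → ℝ,
        (∀ ζ : Md d, f ζ = ⨅ w : S, ∫ ω, ‖ζ + (w : Ω → Md d) ω‖ ^ p ω / p ω ∂P) →
      ∀ fs : Md d → ℝ≥0∞,
        (∀ ζ : Md d, fs ζ = ⨅ (w : Ω → Md d) (_ : Measurable w)
          (_ : ∫⁻ ω, ENNReal.ofReal (‖w ω‖ ^ (p ω / (p ω - 1))) ∂P < ⊤)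
          (_ : ∀ v ∈ S, ∫ ω, ⟪w ω, v ω⟫ ∂P = 0)
          (_ : ∫ ω, w ω ∂P = ζ),
          ∫⁻ ω, ENNReal.ofReal (‖w ω‖ ^ (p ω / (p ω - 1)) / (p ω / (p ω - 1))) ∂P) →
      ∀ (ξ : Md d) (vξ : Ω → Md d), vξ ∈ S →
        (∀ θ ∈ S, ∫ ω, ⟪A ω (ξ + vξ ω), θ ω⟫ ∂P = 0) →
        fs (∫ ω, A ω (ξ + vξ ω) ∂P) ≤ ENNReal.ofReal (c * f ξ + c) := by
  have hβ : 1 < β := lt_of_lt_of_le hα hαβ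
  have hβ1 : 0 < β - 1 := by linarith
  set Bp := β / (β - 1) with hBp_def
  have hBp1 : 1 < Bp := (one_lt_div hβ1).2 (by linarith)
  have hBp0 : 0 < Bp := by linarith
  set ε := min 1 ((c₀ / (2 * c₁)) ^ (1 / Bp)) with hε_def
  have hε0 : 0 < ε := lt_min one_pos (Real.rpow_pos_of_pos (by positivity) _)
  have hε1 : ε ≤ 1 := min_le_left _ _
  have hεB : ε ^ Bp * c₁ ≤ c₀ / 2 := by
    have h1 : ε ^ Bp ≤ ((c₀ / (2 * c₁)) ^ (1 / Bp)) ^ Bp :=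
      Real.rpow_le_rpow hε0.le (min_le_right _ _) hBp0.le
    have h2 : ((c₀ / (2 * c₁)) ^ (1 / Bp)) ^ Bp = c₀ / (2 * c₁) := by
      rw [← Real.rpow_mul (by positivity), one_div, inv_mul_cancel₀ (ne_of_gt hBp0),
        Real.rpow_one]
    rw [h2] at h1
    calc ε ^ Bp * c₁ ≤ (c₀ / (2 * c₁)) * c₁ := by nlinarith
      _ = c₀ / 2 := by field_simp
  set D := ε ^ (-β) with hD_def
  have hD0 : 0 < D := Real.rpow_pos_of_pos hε0 _
  set K₁ := 2 / c₀ * D with hK₁_def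
  set K₂ := 2 / c₀ * (c₀⁻¹ + c₀ / 2) with hK₂_def
  have hK₁0 : 0 < K₁ := by positivity
  have hK₂0 : 0 < K₂ := by positivity
  clear_value D K₁ K₂
  refine ⟨c₁ * K₁ + c₁ * K₂ + c₁, by positivity, ?_⟩
  intro Ω _ P _ p hpm hpα hpβ A hAm hAc hcoerc hgrowth S hSm hSfin hS0 hSadd hSsmul hSmean
    f hf fs hfs ξ vξ hv hcell
  have hp1 : ∀ ω, 1 < p ω := fun ω => lt_of_lt_of_le hα (hpα ω)
  have hp0 : ∀ ω, 0 < p ω := fun ω => lt_trans one_pos (hp1 ω)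
  have hp'1 : ∀ ω, 1 < p ω / (p ω - 1) := fun ω => (aux_conj (hp1 ω)).lt
  have hp'm : Measurable fun ω => p ω / (p ω - 1) := hpm.div (hpm.sub measurable_const)
  have hp'Bp : ∀ ω, Bp ≤ p ω / (p ω - 1) := by
    intro ω
    rw [hBp_def, div_le_div_iff₀ hβ1 (by linarith [hp1 ω])]
    nlinarith [hpβ ω, hp1 ω]
  have hvm : Measurable vξ := hSm vξ hv
  set η : Ω → Md d := fun ω => ξ + vξ ω with hη_def
  have hηm : Measurable η := measurable_const.add hvm
  set a : Ω → Md d := fun ω => A ω (η ω) with ha_def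
  have hAu : Measurable (Function.uncurry fun (x : Md d) (ω : Ω) => A ω x) :=
    measurable_uncurry_of_continuous_of_measurable (fun ω => hAc ω) hAm
  have ham : Measurable a := hAu.comp (hηm.prodMk measurable_id)
  have int_of : ∀ g : Ω → ℝ, Measurable g → (∀ ω, 0 ≤ g ω) →
      ∫⁻ ω, ENNReal.ofReal (g ω) ∂P < ⊤ → Integrable g P := by
    intro g hg h0 hfin
    exact ⟨hg.aestronglyMeasurable, (hasFiniteIntegral_iff_ofReal (ae_of_all _ h0)).2 hfin⟩
  have hInt_vp : Integrable (fun ω => ‖vξ ω‖ ^ p ω) P :=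
    int_of _ (hvm.norm.pow hpm) (fun ω => Real.rpow_nonneg (norm_nonneg _) _) (hSfin vξ hv)
  have key_int : ∀ (z : Md d) (w : Ω → Md d), Measurable w →
      Integrable (fun ω => ‖w ω‖ ^ p ω) P → Integrable (fun ω => ‖z + w ω‖ ^ p ω) P := by
    intro z w hw hint
    refine Integrable.mono' (((integrable_const (‖z‖ ^ β + 1)).add hint).const_mul (2 ^ β))
      ((measurable_const.add hw).norm.pow hpm).aestronglyMeasurable (ae_of_all _ fun ω => ?_)
    rw [Real.norm_eq_abs, abs_of_nonneg (Real.rpow_nonneg (norm_nonneg _) _)]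
    calc ‖z + w ω‖ ^ p ω ≤ (‖z‖ + ‖w ω‖) ^ p ω :=
          Real.rpow_le_rpow (norm_nonneg _) (norm_add_le _ _) (hp0 ω).le
      _ ≤ 2 ^ β * (‖z‖ ^ p ω + ‖w ω‖ ^ p ω) :=
          aux_add_rpow (norm_nonneg _) (norm_nonneg _) (hp0 ω).le (hpβ ω)
      _ ≤ 2 ^ β * (‖z‖ ^ β + 1 + ‖w ω‖ ^ p ω) := by
          have h1 := aux_rpow_le_rpow_add_one (norm_nonneg z) (hp0 ω) (hpβ ω)
          have h2 : (0:ℝ) ≤ 2 ^ β := Real.rpow_nonneg (by norm_num) _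
          nlinarith
  have hInt_ηp : Integrable (fun ω => ‖η ω‖ ^ p ω) P := key_int ξ vξ hvm hInt_vp
  set G := ∫ ω, ‖η ω‖ ^ p ω ∂P with hG_def
  have hG0 : 0 ≤ G :=
    integral_nonneg fun ω => Real.rpow_nonneg (norm_nonneg _) _
  have hInt1 : Integrable (fun ω => c₁ * ‖η ω‖ ^ p ω + c₁) P := by
    exact (hInt_ηp.const_mul c₁).add (integrable_const c₁)
  have ha_bound : ∀ ω, ‖a ω‖ ^ (p ω / (p ω - 1)) ≤ c₁ * ‖η ω‖ ^ p ω + c₁ := fun ω =>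
    hgrowth ω (η ω)
  have hInt_ap : Integrable (fun ω => ‖a ω‖ ^ (p ω / (p ω - 1))) P := by
    refine Integrable.mono' hInt1
      (ham.norm.pow hp'm).aestronglyMeasurable (ae_of_all _ fun ω => ?_)
    rw [Real.norm_eq_abs, abs_of_nonneg (Real.rpow_nonneg (norm_nonneg _) _)]
    exact ha_bound ω
  have hInt_inner : ∀ w : Ω → Md d, Measurable w → Integrable (fun ω => ‖w ω‖ ^ p ω) P →
      Integrable (fun ω => ⟪a ω, w ω⟫) P := by
    intro w hw hint
    refine Integrable.mono' (hInt_ap.add hint) (ham.inner hw).aestronglyMeasurable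
      (ae_of_all _ fun ω => ?_)
    rw [Real.norm_eq_abs]
    calc |⟪a ω, w ω⟫| ≤ ‖a ω‖ * ‖w ω‖ := abs_real_inner_le_norm _ _
      _ ≤ 1 ^ (p ω / (p ω - 1)) * ‖a ω‖ ^ (p ω / (p ω - 1)) / (p ω / (p ω - 1))
            + 1 ^ (-(p ω)) * ‖w ω‖ ^ p ω / p ω :=
          aux_young (norm_nonneg _) (norm_nonneg _) (hp1 ω) one_pos
      _ ≤ ‖a ω‖ ^ (p ω / (p ω - 1)) + ‖w ω‖ ^ p ω := by
          rw [Real.one_rpow, Real.one_rpow, one_mul, one_mul]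
          have h1 : ‖a ω‖ ^ (p ω / (p ω - 1)) / (p ω / (p ω - 1))
              ≤ ‖a ω‖ ^ (p ω / (p ω - 1)) :=
            div_le_self (Real.rpow_nonneg (norm_nonneg _) _) (hp'1 ω).le
          have h2 : ‖w ω‖ ^ p ω / p ω ≤ ‖w ω‖ ^ p ω :=
            div_le_self (Real.rpow_nonneg (norm_nonneg _) _) (hp1 ω).le
          linarith
  have hIη : Integrable (fun ω => ⟪a ω, η ω⟫) P := hInt_inner η hηm hInt_ηp
  have hshift : ∀ w : Ω → Md d, w ∈ S → Integrable (fun ω => ‖w ω‖ ^ p ω) P →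
      ∫ ω, ⟪a ω, ξ + w ω⟫ ∂P = ∫ ω, ⟪a ω, η ω⟫ ∂P := by
    intro w hw hintw
    have hwm := hSm w hw
    have hθ : (w + (-1 : ℝ) • vξ) ∈ S := hSadd w hw _ (hSsmul (-1) vξ hv)
    have h0 := hcell _ hθ
    have hθm : Measurable fun ω => w ω - vξ ω := hwm.sub hvm
    have hθint : Integrable (fun ω => ‖w ω - vξ ω‖ ^ p ω) P := by
      refine Integrable.mono' ((hintw.add hInt_vp).const_mul (2 ^ β))
        (hθm.norm.pow hpm).aestronglyMeasurable (ae_of_all _ fun ω => ?_)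
      rw [Real.norm_eq_abs, abs_of_nonneg (Real.rpow_nonneg (norm_nonneg _) _)]
      calc ‖w ω - vξ ω‖ ^ p ω ≤ (‖w ω‖ + ‖vξ ω‖) ^ p ω :=
            Real.rpow_le_rpow (norm_nonneg _) (norm_sub_le _ _) (hp0 ω).le
        _ ≤ 2 ^ β * (‖w ω‖ ^ p ω + ‖vξ ω‖ ^ p ω) :=
            aux_add_rpow (norm_nonneg _) (norm_nonneg _) (hp0 ω).le (hpβ ω)
    have hIθ : Integrable (fun ω => ⟪a ω, w ω - vξ ω⟫) P := hInt_inner _ hθm hθint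
    have hsum : (fun ω => ⟪a ω, ξ + w ω⟫) =
        fun ω => ⟪a ω, η ω⟫ + ⟪a ω, w ω - vξ ω⟫ := by
      funext ω
      rw [← inner_add_right]
      congr 1
      show ξ + w ω = (ξ + vξ ω) + (w ω - vξ ω)
      abel
    rw [hsum, integral_add hIη hIθ]
    have hz : ∫ ω, ⟪a ω, w ω - vξ ω⟫ ∂P = 0 := by
      have he : (fun ω => ⟪a ω, w ω - vξ ω⟫) =
          fun ω => ⟪A ω (ξ + vξ ω), (w + (-1 : ℝ) • vξ) ω⟫ := by
        funext ω
        simp [sub_eq_add_neg]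
        rfl
      rw [he]
      exact h0
    rw [hz, add_zero]
  have hstep1 : c₀ * G - c₀⁻¹ ≤ ∫ ω, ⟪a ω, η ω⟫ ∂P := by
    have hlhs : Integrable (fun ω => c₀ * ‖η ω‖ ^ p ω - c₀⁻¹) P :=
      (hInt_ηp.const_mul c₀).sub (integrable_const _)
    have h := integral_mono hlhs hIη (fun ω => hcoerc ω (η ω))
    rwa [integral_sub (hInt_ηp.const_mul c₀) (integrable_const _), integral_const_mul,
      integral_const, probReal_univ, one_smul] at h
  have energy : ∀ w : Ω → Md d, w ∈ S →
      G ≤ K₁ * (∫ ω, ‖ξ + w ω‖ ^ p ω / p ω ∂P) + K₂ := by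
    intro w hw
    have hwm := hSm w hw
    have hintw : Integrable (fun ω => ‖w ω‖ ^ p ω) P :=
      int_of _ (hwm.norm.pow hpm) (fun ω => Real.rpow_nonneg (norm_nonneg _) _) (hSfin w hw)
    have hξw : Integrable (fun ω => ‖ξ + w ω‖ ^ p ω) P := key_int ξ w hwm hintw
    have hξwp : Integrable (fun ω => ‖ξ + w ω‖ ^ p ω / p ω) P := by
      refine Integrable.mono' hξw
        (((measurable_const.add hwm).norm.pow hpm).div hpm).aestronglyMeasurable
        (ae_of_all _ fun ω => ?_)
      rw [Real.norm_eq_abs, abs_of_nonneg (div_nonneg (Real.rpow_nonneg (norm_nonneg _) _)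
        (hp0 ω).le)]
      exact div_le_self (Real.rpow_nonneg (norm_nonneg _) _) (hp1 ω).le
    set Iw := ∫ ω, ‖ξ + w ω‖ ^ p ω / p ω ∂P with hIw_def
    have hIw0 : 0 ≤ Iw := integral_nonneg fun ω =>
      div_nonneg (Real.rpow_nonneg (norm_nonneg _) _) (hp0 ω).le
    have hpt : ∀ ω, ⟪a ω, ξ + w ω⟫ ≤
        ε ^ Bp * (c₁ * ‖η ω‖ ^ p ω + c₁) + D * (‖ξ + w ω‖ ^ p ω / p ω) := by
      intro ω
      have hy := aux_young (norm_nonneg (a ω)) (norm_nonneg (ξ + w ω)) (hp1 ω) hε0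
      have h1 : ⟪a ω, ξ + w ω⟫ ≤ ‖a ω‖ * ‖ξ + w ω‖ := real_inner_le_norm _ _
      have h2 : ε ^ (p ω / (p ω - 1)) ≤ ε ^ Bp :=
        Real.rpow_le_rpow_of_exponent_ge hε0 hε1 (hp'Bp ω)
      have h3 : ε ^ (-(p ω)) ≤ D := by
        rw [hD_def]
        exact Real.rpow_le_rpow_of_exponent_ge hε0 hε1 (by linarith [hpβ ω])
      have h4 : ‖a ω‖ ^ (p ω / (p ω - 1)) / (p ω / (p ω - 1)) ≤ c₁ * ‖η ω‖ ^ p ω + c₁ :=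
        le_trans (div_le_self (Real.rpow_nonneg (norm_nonneg _) _) (hp'1 ω).le) (ha_bound ω)
      have hA' : ε ^ (p ω / (p ω - 1)) * ‖a ω‖ ^ (p ω / (p ω - 1)) / (p ω / (p ω - 1))
          ≤ ε ^ Bp * (c₁ * ‖η ω‖ ^ p ω + c₁) := by
        rw [mul_div_assoc]
        exact mul_le_mul h2 h4
          (div_nonneg (Real.rpow_nonneg (norm_nonneg _) _) (lt_trans one_pos (hp'1 ω)).le)
          (Real.rpow_nonneg hε0.le _)
      have hB' : ε ^ (-(p ω)) * ‖ξ + w ω‖ ^ p ω / p ω ≤ D * (‖ξ + w ω‖ ^ p ω / p ω) := by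
        rw [mul_div_assoc]
        exact mul_le_mul_of_nonneg_right h3
          (div_nonneg (Real.rpow_nonneg (norm_nonneg _) _) (hp0 ω).le)
      linarith
    have hmono := integral_mono (hInt_inner _ (measurable_const.add hwm) hξw)
      ((hInt1.const_mul (ε ^ Bp)).add (hξwp.const_mul D))
      hpt
    have hcalc : ∫ ω, (ε ^ Bp * (c₁ * ‖η ω‖ ^ p ω + c₁) + D * (‖ξ + w ω‖ ^ p ω / p ω)) ∂P
        = ε ^ Bp * (c₁ * G + c₁) + D * Iw := by
      rw [integral_add (hInt1.const_mul _)
        (hξwp.const_mul D), integral_const_mul, integral_const_mul,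
        integral_add (hInt_ηp.const_mul c₁) (integrable_const _), integral_const_mul,
        integral_const, probReal_univ, one_smul]
    have hEq := hshift w hw hintw
    have hchain : c₀ * G - c₀⁻¹ ≤ ε ^ Bp * (c₁ * G + c₁) + D * Iw := by
      calc c₀ * G - c₀⁻¹ ≤ ∫ ω, ⟪a ω, η ω⟫ ∂P := hstep1
        _ = ∫ ω, ⟪a ω, ξ + w ω⟫ ∂P := hEq.symm
        _ ≤ _ := hmono
        _ = _ := hcalc
    have h5 : ε ^ Bp * (c₁ * G + c₁) ≤ (c₀ / 2) * G + c₀ / 2 := by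
      nlinarith [mul_le_mul_of_nonneg_right hεB hG0, hεB]
    have hlin : c₀ * G ≤ 2 * (D * Iw) + 2 * c₀⁻¹ + c₀ := by linarith
    have hKK : K₁ * Iw + K₂ = (2 * (D * Iw) + 2 * c₀⁻¹ + c₀) / c₀ := by
      rw [hK₁_def, hK₂_def]
      field_simp
      ring
    rw [hKK, le_div_iff₀ hc₀]
    linarith
  haveI : Nonempty S := ⟨⟨0, hS0⟩⟩
  have hf0 : 0 ≤ f ξ := by
    rw [hf ξ]
    exact le_ciInf fun w => integral_nonneg fun ω =>
      div_nonneg (Real.rpow_nonneg (norm_nonneg _) _) (hp0 ω).le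
  have hGf : G ≤ K₁ * f ξ + K₂ := by
    have h1 : (G - K₂) / K₁ ≤ f ξ := by
      rw [hf ξ]
      refine le_ciInf fun w => ?_
      rw [div_le_iff₀ hK₁0]
      have h := energy w.1 w.2
      linarith
    rw [div_le_iff₀ hK₁0] at h1
    linarith
  have hfin_a : ∫⁻ ω, ENNReal.ofReal (‖a ω‖ ^ (p ω / (p ω - 1))) ∂P < ⊤ := by
    rw [← ofReal_integral_eq_lintegral_ofReal hInt_ap
      (ae_of_all _ fun ω => Real.rpow_nonneg (norm_nonneg _) _)]
    exact ENNReal.ofReal_lt_top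
  rw [hfs]
  refine le_trans (iInf_le_of_le a (iInf_le_of_le ham (iInf_le_of_le hfin_a
    (iInf_le_of_le hcell (iInf_le_of_le rfl le_rfl))))) ?_
  have hbound2 : ∫⁻ ω, ENNReal.ofReal (‖a ω‖ ^ (p ω / (p ω - 1)) / (p ω / (p ω - 1))) ∂P
      ≤ ∫⁻ ω, ENNReal.ofReal (c₁ * ‖η ω‖ ^ p ω + c₁) ∂P := by
    refine lintegral_mono fun ω => ENNReal.ofReal_le_ofReal ?_
    exact le_trans (div_le_self (Real.rpow_nonneg (norm_nonneg _) _) (hp'1 ω).le) (ha_bound ω)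
  have heq2 : ∫⁻ ω, ENNReal.ofReal (c₁ * ‖η ω‖ ^ p ω + c₁) ∂P
      = ENNReal.ofReal (c₁ * G + c₁) := by
    rw [← ofReal_integral_eq_lintegral_ofReal hInt1
      (ae_of_all _ fun ω => add_nonneg (mul_nonneg hc₁.le
        (Real.rpow_nonneg (norm_nonneg _) _)) hc₁.le)]
    congr 1
    rw [integral_add (hInt_ηp.const_mul c₁) (integrable_const _), integral_const_mul,
      integral_const, probReal_univ, one_smul]
  refine le_trans hbound2 (le_trans heq2.le (ENNReal.ofReal_le_ofReal ?_))
  nlinarith [mul_le_mul_of_nonneg_left hGf hc₁.le,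
    mul_nonneg (mul_nonneg hc₁.le hK₂0.le) hf0, mul_nonneg hc₁.le hf0,
    mul_nonneg (mul_nonneg hc₁.le hK₁0.le) hf0]
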